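/- Define R0 = Πβk1/(μ1 μ2 μ3). If R0 > 1, then the triple H1 = Π/(μ1 R0), I1 = μ1 μ3 (R0 − 1)/(β k1), V1 = μ1 (R0 − 1)/β consists of strictly positive real numbers and satisfies the equilibrium equations Π − βH1V1 − μ1 H1 = 0, βH1V1 − μ2 I1 = 0, and k1 I1 − μ3 V1 = 0. -/

import Mathlib

/-- Existence of the immune-free virus-persistence equilibrium E1 when R0 > 1. -/
theorem E1_exists (Pi beta k1 mu1 mu2 mu3 : ℝ)
    (hPi : 0 < Pi) (hbeta : 0 < beta) (hk1 : 0 < k1)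
    (hmu1 : 0 < mu1) (hmu2 : 0 < mu2) (hmu3 : 0 < mu3)
    (R0 H1 I1 V1 : ℝ)
    (hR0 : R0 = Pi * beta * k1 / (mu1 * mu2 * mu3))
    (hR0gt : 1 < R0)
    (hH1 : H1 = Pi / (mu1 * R0))
    (hI1 : I1 = mu1 * mu3 * (R0 - 1) / (beta * k1))
    (hV1 : V1 = mu1 * (R0 - 1) / beta) :
    0 < H1 ∧ 0 < I1 ∧ 0 < V1 ∧
    Pi - beta * H1 * V1 - mu1 * H1 = 0 ∧
    beta * H1 * V1 - mu2 * I1 = 0 ∧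
    k1 * I1 - mu3 * V1 = 0 := by
  have hR0pos : 0 < R0 := lt_trans one_pos hR0gt
  have hRm : 0 < R0 - 1 := by linarith
  have hmuR : (mu1 * mu2 * mu3) ≠ 0 := by positivity
  have hkey : R0 * (mu1 * mu2 * mu3) = Pi * beta * k1 := by
    rw [hR0]; field_simp
  subst hH1 hI1 hV1
  refine ⟨by positivity, by positivity, by positivity, ?_, ?_, ?_⟩
  · field_simp; ring_nf
  · field_simp
    linear_combination (-(R0 - 1)) * hkey
  · field_simp; ring
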